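/- arXiv:1606.05300 — 2 statements merged into one kernel-verified Lean document; each statement's English description precedes it below -/
import Mathlib

section
/- The recursive optimal transport quantities satisfy the triangle inequality: d_{mn} ≤ d_{mp} + d_{pn} for all m, n, p ≥ -1. Consequently (m,n) ↦ d_{mn} defines a metric on the set {-1, 0, 1, 2, ...}. -/
open Finset

/-- `kmPi α i n` is `π_i^n = α_i ∏_{k=i+1}^n (1 - α_k)` (empty product = 1). -/
noncomputable def kmPi (α : ℕ → ℝ) (i n : ℕ) : ℝ :=
  α i * ∏ k ∈ Finset.Icc (i + 1) n, (1 - α k)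
/-- A feasible transport plan between the probability vectors `π^m` and `π^n`. -/
def IsPlan (α : ℕ → ℝ) (m n : ℕ) (z : ℕ → ℕ → ℝ) : Prop :=
  (∀ i ≤ m, ∀ j ≤ n, 0 ≤ z i j) ∧
  (∀ i ≤ m, ∑ j ∈ Finset.range (n + 1), z i j = kmPi α i m) ∧
  (∀ j ≤ n, ∑ i ∈ Finset.range (m + 1), z i j = kmPi α j n)

/-- Transport cost `Σ_{i=0}^m Σ_{j=0}^n z_{ij} d_{i-1,j-1}`, where indices of `D` are
shifted by one: `D i j` stands for `d_{i-1,j-1}`. -/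
noncomputable def planCost (D : ℕ → ℕ → ℝ) (m n : ℕ) (z : ℕ → ℕ → ℝ) : ℝ :=
  ∑ i ∈ Finset.range (m + 1), ∑ j ∈ Finset.range (n + 1), z i j * D i j

/-- `D : ℕ → ℕ → ℝ` encodes the family `d_{mn}` for `m, n ∈ {-1,0,1,...}` with indices
shifted by one: `D (m+1) (n+1) = d_{m,n}`, `D 0 (k+1) = d_{-1,k}`, etc.  It is the
recursive optimal-transport family: boundary values `d_{-1,-1} = 0`,
`d_{-1,k} = d_{k,-1} = 1`, and `d_{mn}` is the minimum transport cost between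
`π^m` and `π^n` (the minimum, i.e. attained greatest lower bound). -/
def IsKMDist (α : ℕ → ℝ) (D : ℕ → ℕ → ℝ) : Prop :=
  D 0 0 = 0 ∧ (∀ k : ℕ, D 0 (k + 1) = 1) ∧ (∀ k : ℕ, D (k + 1) 0 = 1) ∧
  ∀ m n : ℕ,
    IsLeast {c : ℝ | ∃ z : ℕ → ℕ → ℝ, IsPlan α m n z ∧ c = planCost D m n z}
      (D (m + 1) (n + 1))


set_option linter.unusedSectionVars false
section aux
variable {α : ℕ → ℝ} (hα0 : α 0 = 1) (hα : ∀ n, 1 ≤ n → α n ∈ Set.Ioo (0 : ℝ) 1)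
include hα0 hα

lemma kmPi_pos (i n : ℕ) : 0 < kmPi α i n := by
  unfold kmPi
  apply mul_pos
  · rcases Nat.eq_zero_or_pos i with h | h
    · simp [h, hα0]
    · exact (hα i h).1
  · apply Finset.prod_pos
    intro k hk
    have : 1 ≤ k := le_trans (Nat.le_add_left 1 i) (mem_Icc.mp hk).1
    have := (hα k this).2
    linarith

omit hα0 hα in
lemma kmPi_diag (n : ℕ) : kmPi α n n = α n := by
  unfold kmPi
  rw [Finset.Icc_eq_empty (by omega), Finset.prod_empty, mul_one]

lemma kmPi_sum : ∀ n, ∑ i ∈ Finset.range (n + 1), kmPi α i n = 1 := by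
  intro n
  induction n with
  | zero => simp [show kmPi α 0 0 = α 0 from kmPi_diag 0, hα0]
  | succ n ih =>
    have hstep : ∀ i ∈ Finset.range (n + 1), kmPi α i (n + 1) = kmPi α i n * (1 - α (n + 1)) := by
      intro i hi
      have hi' : i ≤ n := Nat.lt_succ_iff.mp (mem_range.mp hi)
      unfold kmPi
      rw [Finset.prod_Icc_succ_top (by omega)]
      ring
    rw [Finset.sum_range_succ, kmPi_diag, Finset.sum_congr rfl hstep, ← Finset.sum_mul, ih]
    ring

lemma plan_total {m n : ℕ} {z : ℕ → ℕ → ℝ} (hz : IsPlan α m n z) :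
    ∑ i ∈ Finset.range (m + 1), ∑ j ∈ Finset.range (n + 1), z i j = 1 := by
  rw [Finset.sum_congr rfl fun i hi => hz.2.1 i (by simpa using Nat.lt_succ_iff.mp (mem_range.mp hi))]
  exact kmPi_sum hα0 hα m

end aux

section dlem
variable {α : ℕ → ℝ} (hα0 : α 0 = 1) (hα : ∀ n, 1 ≤ n → α n ∈ Set.Ioo (0 : ℝ) 1)
variable {D : ℕ → ℕ → ℝ} (hD : IsKMDist α D)
include hα0 hα hD

lemma D_le_cost {m n : ℕ} {z : ℕ → ℕ → ℝ} (hz : IsPlan α m n z) :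
    D (m + 1) (n + 1) ≤ planCost D m n z :=
  (hD.2.2.2 m n).2 ⟨z, hz, rfl⟩

lemma D_nonneg : ∀ m n, 0 ≤ D m n := by
  suffices H : ∀ N m n, m + n = N → 0 ≤ D m n from fun m n => H _ m n rfl
  intro N
  induction N using Nat.strong_induction_on with
  | _ N ih =>
    intro m n hmn
    subst hmn
    rcases m with _ | m
    · rcases n with _ | n
      · exact le_of_eq hD.1.symm
      · rw [hD.2.1]; norm_num
    · rcases n with _ | n
      · rw [hD.2.2.1]; norm_num
      · obtain ⟨z, hz, hc⟩ := (hD.2.2.2 m n).1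
        rw [hc]
        apply Finset.sum_nonneg; intro i hi
        apply Finset.sum_nonneg; intro j hj
        have hi' : i ≤ m := Nat.lt_succ_iff.mp (mem_range.mp hi)
        have hj' : j ≤ n := Nat.lt_succ_iff.mp (mem_range.mp hj)
        exact mul_nonneg (hz.1 i hi' j hj') (ih (i + j) (by omega) i j rfl)

lemma D_le_one : ∀ m n, D m n ≤ 1 := by
  suffices H : ∀ N m n, m + n = N → D m n ≤ 1 from fun m n => H _ m n rfl
  intro N
  induction N using Nat.strong_induction_on with
  | _ N ih =>
    intro m n hmn
    subst hmn
    rcases m with _ | m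
    · rcases n with _ | n
      · rw [hD.1]; norm_num
      · rw [hD.2.1]
    · rcases n with _ | n
      · rw [hD.2.2.1]
      · obtain ⟨z, hz, hc⟩ := (hD.2.2.2 m n).1
        rw [hc]
        calc planCost D m n z
            ≤ ∑ i ∈ Finset.range (m + 1), ∑ j ∈ Finset.range (n + 1), z i j := by
              apply Finset.sum_le_sum; intro i hi
              apply Finset.sum_le_sum; intro j hj
              have hi' : i ≤ m := Nat.lt_succ_iff.mp (mem_range.mp hi)
              have hj' : j ≤ n := Nat.lt_succ_iff.mp (mem_range.mp hj)
              exact mul_le_of_le_one_right (hz.1 i hi' j hj') (ih (i + j) (by omega) i j rfl)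
          _ = 1 := plan_total hα0 hα hz

omit hα0 hα hD in
lemma IsPlan.transpose {m n : ℕ} {z : ℕ → ℕ → ℝ} (hz : IsPlan α m n z) :
    IsPlan α n m (fun j i => z i j) :=
  ⟨fun j hj i hi => hz.1 i hi j hj, hz.2.2, hz.2.1⟩

lemma D_symm : ∀ m n, D m n = D n m := by
  suffices H : ∀ N m n, m + n = N → D m n = D n m from fun m n => H _ m n rfl
  intro N
  induction N using Nat.strong_induction_on with
  | _ N ih =>
    intro m n hmn
    subst hmn
    rcases m with _ | m
    · rcases n with _ | n
      · rfl
      · rw [hD.2.1, hD.2.2.1]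
    · rcases n with _ | n
      · rw [hD.2.1, hD.2.2.1]
      · have one : ∀ a b : ℕ, a + b = m + n →
            D (b + 1) (a + 1) ≤ D (a + 1) (b + 1) := by
          intro a b hab
          obtain ⟨z, hz, hc⟩ := (hD.2.2.2 a b).1
          have h1 : D (b + 1) (a + 1) ≤ planCost D b a (fun j i => z i j) :=
            D_le_cost hα0 hα hD hz.transpose
          have h2 : planCost D b a (fun j i => z i j) = planCost D a b z := by
            unfold planCost
            rw [Finset.sum_comm]
            apply Finset.sum_congr rfl; intro i hi
            apply Finset.sum_congr rfl; intro j hj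
            have hi' : i ≤ a := Nat.lt_succ_iff.mp (mem_range.mp hi)
            have hj' : j ≤ b := Nat.lt_succ_iff.mp (mem_range.mp hj)
            rw [ih (j + i) (by omega) j i rfl]
          exact (h1.trans_eq h2).trans_eq hc.symm
        exact le_antisymm (one n m (by omega)) (one m n (by omega))
end dlem

section dlem2
variable {α : ℕ → ℝ} (hα0 : α 0 = 1) (hα : ∀ n, 1 ≤ n → α n ∈ Set.Ioo (0 : ℝ) 1)
variable {D : ℕ → ℕ → ℝ} (hD : IsKMDist α D)
include hα0 hα hD

lemma D_diag : ∀ m, D m m = 0 := by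
  intro m
  induction m using Nat.strong_induction_on with
  | _ m ih =>
    rcases m with _ | m
    · exact hD.1
    · have hplan : IsPlan α m m (fun i j => if i = j then kmPi α i m else 0) := by
        refine ⟨?_, ?_, ?_⟩
        · intro i _ j _
          dsimp only
          split
          · exact (kmPi_pos hα0 hα i m).le
          · exact le_refl 0
        · intro i hi
          simp [Finset.sum_ite_eq, mem_range, Nat.lt_succ_iff, hi]
        · intro j hj
          simp [Finset.sum_ite_eq', mem_range, Nat.lt_succ_iff, hj]
      have h1 := D_le_cost hα0 hα hD hplan
      have h2 : planCost D m m (fun i j => if i = j then kmPi α i m else 0) = 0 := by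
        unfold planCost
        apply Finset.sum_eq_zero; intro i hi
        apply Finset.sum_eq_zero; intro j hj
        rcases eq_or_ne i j with rfl | hij
        · have hi' : i < m + 1 := mem_range.mp hi
          simp [ih i hi']
        · simp [hij]
      have h3 := D_nonneg hα0 hα hD (m + 1) (m + 1)
      exact le_antisymm (h1.trans_eq h2) h3

lemma D_pos : ∀ m n, m ≠ n → 0 < D m n := by
  suffices H : ∀ N m n, m + n = N → m ≠ n → 0 < D m n from fun m n => H _ m n rfl
  intro N
  induction N using Nat.strong_induction_on with
  | _ N ih =>
    intro m n hmn hne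
    subst hmn
    have main : ∀ a b : ℕ, a < b →
        (∀ i j : ℕ, i + j < a + 1 + (b + 1) → i ≠ j → 0 < D i j) → 0 < D (a + 1) (b + 1) := by
      intro a b hab ih'
      obtain ⟨z, hz, hc⟩ := (hD.2.2.2 a b).1
      have hcol : ∑ i ∈ Finset.range (a + 1), z i b = α b := by
        rw [hz.2.2 b le_rfl, kmPi_diag]
      have hbpos : 0 < α b := (hα b (by omega)).1
      have hex : ∃ i0, i0 ∈ Finset.range (a + 1) ∧ 0 < z i0 b := by
        by_contra h
        push_neg at h
        have : ∑ i ∈ Finset.range (a + 1), z i b ≤ 0 :=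
          Finset.sum_nonpos fun i hi => h i hi
        linarith
      obtain ⟨i0, hi0, hzi0⟩ := hex
      have hi0' : i0 ≤ a := Nat.lt_succ_iff.mp (mem_range.mp hi0)
      have hDpos : 0 < D i0 b := ih' i0 b (by omega) (by omega)
      have hnn : ∀ i ∈ Finset.range (a + 1), ∀ j ∈ Finset.range (b + 1), 0 ≤ z i j * D i j := by
        intro i hi j hj
        exact mul_nonneg
          (hz.1 i (Nat.lt_succ_iff.mp (mem_range.mp hi)) j (Nat.lt_succ_iff.mp (mem_range.mp hj)))
          (D_nonneg hα0 hα hD i j)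
      have step1 : z i0 b * D i0 b ≤ ∑ j ∈ Finset.range (b + 1), z i0 j * D i0 j :=
        Finset.single_le_sum (f := fun j => z i0 j * D i0 j) (fun j hj => hnn i0 hi0 j hj)
          (mem_range.mpr (by omega))
      have step2 : (∑ j ∈ Finset.range (b + 1), z i0 j * D i0 j) ≤ planCost D a b z :=
        Finset.single_le_sum (f := fun i => ∑ j ∈ Finset.range (b + 1), z i j * D i j)
          (fun i hi => Finset.sum_nonneg fun j hj => hnn i hi j hj) hi0
      have := mul_pos hzi0 hDpos
      rw [hc]
      linarith
    rcases m with _ | m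
    · rcases n with _ | n
      · omega
      · rw [hD.2.1]; norm_num
    · rcases n with _ | n
      · rw [hD.2.2.1]; norm_num
      · rcases Nat.lt_or_ge m n with h | h
        · exact main m n h (fun i j h1 h2 => ih (i + j) (by omega) i j rfl h2)
        · have hnm : n < m := by omega
          rw [D_symm hα0 hα hD]
          exact main n m hnm (fun i j h1 h2 => ih (i + j) (by omega) i j rfl h2)
end dlem2

section dlem3
variable {α : ℕ → ℝ} (hα0 : α 0 = 1) (hα : ∀ n, 1 ≤ n → α n ∈ Set.Ioo (0 : ℝ) 1)
variable {D : ℕ → ℕ → ℝ} (hD : IsKMDist α D)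
include hα0 hα hD

lemma D_triangle : ∀ m n p, D m n ≤ D m p + D p n := by
  suffices H : ∀ N m n p, m + n + p = N → D m n ≤ D m p + D p n from fun m n p => H _ m n p rfl
  intro N
  induction N using Nat.strong_induction_on with
  | _ N ih =>
    intro m n p hmnp
    subst hmnp
    rcases m with _ | m
    · rcases n with _ | n
      · have h1 := D_nonneg hα0 hα hD 0 p
        have h2 := D_nonneg hα0 hα hD p 0
        rw [hD.1]; linarith
      · rcases p with _ | p
        · rw [hD.1]; linarith [le_refl (D 0 (n + 1))]
        · rw [hD.2.1, hD.2.1]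
          have := D_nonneg hα0 hα hD (p + 1) (n + 1)
          linarith
    · rcases n with _ | n
      · rcases p with _ | p
        · rw [hD.1]; linarith [le_refl (D (m + 1) 0)]
        · rw [hD.2.2.1, hD.2.2.1]
          have := D_nonneg hα0 hα hD (m + 1) (p + 1)
          linarith
      · rcases p with _ | p
        · rw [hD.2.2.1, hD.2.1]
          have := D_le_one hα0 hα hD (m + 1) (n + 1)
          linarith
        · -- main case: compose optimal plans
          obtain ⟨z1, hz1, hc1⟩ := (hD.2.2.2 m p).1
          obtain ⟨z2, hz2, hc2⟩ := (hD.2.2.2 p n).1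
          have hπ : ∀ k, (0:ℝ) < kmPi α k p := fun k => kmPi_pos hα0 hα k p
          have hπ' : ∀ k, kmPi α k p ≠ 0 := fun k => (hπ k).ne'
          set z : ℕ → ℕ → ℝ :=
            fun i j => ∑ k ∈ Finset.range (p + 1), z1 i k * z2 k j / kmPi α k p with hzdef
          have hplan : IsPlan α m n z := by
            refine ⟨?_, ?_, ?_⟩
            · intro i hi j hj
              apply Finset.sum_nonneg; intro k hk
              have hk' : k ≤ p := Nat.lt_succ_iff.mp (mem_range.mp hk)
              exact div_nonneg (mul_nonneg (hz1.1 i hi k hk') (hz2.1 k hk' j hj)) (hπ k).le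
            · intro i hi
              rw [show (∑ j ∈ Finset.range (n + 1), z i j) =
                  ∑ k ∈ Finset.range (p + 1), ∑ j ∈ Finset.range (n + 1),
                    z1 i k * z2 k j / kmPi α k p from Finset.sum_comm]
              rw [← hz1.2.1 i hi]
              apply Finset.sum_congr rfl; intro k hk
              have hk' : k ≤ p := Nat.lt_succ_iff.mp (mem_range.mp hk)
              rw [show (∑ j ∈ Finset.range (n + 1), z1 i k * z2 k j / kmPi α k p) =
                  (z1 i k / kmPi α k p) * ∑ j ∈ Finset.range (n + 1), z2 k j by
                rw [Finset.mul_sum]; exact Finset.sum_congr rfl fun j _ => by ring]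
              rw [hz2.2.1 k hk', div_mul_cancel₀ _ (hπ' k)]
            · intro j hj
              rw [show (∑ i ∈ Finset.range (m + 1), z i j) =
                  ∑ k ∈ Finset.range (p + 1), ∑ i ∈ Finset.range (m + 1),
                    z1 i k * z2 k j / kmPi α k p from Finset.sum_comm]
              rw [← hz2.2.2 j hj]
              apply Finset.sum_congr rfl; intro k hk
              have hk' : k ≤ p := Nat.lt_succ_iff.mp (mem_range.mp hk)
              rw [show (∑ i ∈ Finset.range (m + 1), z1 i k * z2 k j / kmPi α k p) =
                  (z2 k j / kmPi α k p) * ∑ i ∈ Finset.range (m + 1), z1 i k by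
                rw [Finset.mul_sum]; exact Finset.sum_congr rfl fun i _ => by ring]
              rw [hz1.2.2 k hk', div_mul_cancel₀ _ (hπ' k)]
          have tri : ∀ i ≤ m, ∀ j ≤ n, ∀ k ≤ p, D i j ≤ D i k + D k j :=
            fun i hi j hj k hk => ih (i + j + k) (by omega) i j k rfl
          have hcost : planCost D m n z ≤ planCost D m p z1 + planCost D p n z2 := by
            calc planCost D m n z
                = ∑ i ∈ Finset.range (m + 1), ∑ j ∈ Finset.range (n + 1),
                    ∑ k ∈ Finset.range (p + 1), z1 i k * z2 k j / kmPi α k p * D i j := by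
                  unfold planCost
                  exact Finset.sum_congr rfl fun i _ => Finset.sum_congr rfl fun j _ =>
                    Finset.sum_mul _ _ _
              _ ≤ ∑ i ∈ Finset.range (m + 1), ∑ j ∈ Finset.range (n + 1),
                    ∑ k ∈ Finset.range (p + 1), (z1 i k * z2 k j / kmPi α k p * D i k
                      + z1 i k * z2 k j / kmPi α k p * D k j) := by
                  apply Finset.sum_le_sum; intro i hi
                  apply Finset.sum_le_sum; intro j hj
                  apply Finset.sum_le_sum; intro k hk
                  have hi' : i ≤ m := Nat.lt_succ_iff.mp (mem_range.mp hi)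
                  have hj' : j ≤ n := Nat.lt_succ_iff.mp (mem_range.mp hj)
                  have hk' : k ≤ p := Nat.lt_succ_iff.mp (mem_range.mp hk)
                  have hcnn : 0 ≤ z1 i k * z2 k j / kmPi α k p :=
                    div_nonneg (mul_nonneg (hz1.1 i hi' k hk') (hz2.1 k hk' j hj')) (hπ k).le
                  have := mul_le_mul_of_nonneg_left (tri i hi' j hj' k hk') hcnn
                  rw [mul_add] at this
                  exact this
              _ = (∑ i ∈ Finset.range (m + 1), ∑ j ∈ Finset.range (n + 1),
                    ∑ k ∈ Finset.range (p + 1), z1 i k * z2 k j / kmPi α k p * D i k)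
                  + ∑ i ∈ Finset.range (m + 1), ∑ j ∈ Finset.range (n + 1),
                    ∑ k ∈ Finset.range (p + 1), z1 i k * z2 k j / kmPi α k p * D k j := by
                  simp [Finset.sum_add_distrib]
              _ = planCost D m p z1 + planCost D p n z2 := by
                  congr 1
                  · unfold planCost
                    apply Finset.sum_congr rfl; intro i hi
                    rw [Finset.sum_comm]
                    apply Finset.sum_congr rfl; intro k hk
                    have hk' : k ≤ p := Nat.lt_succ_iff.mp (mem_range.mp hk)
                    rw [show (∑ j ∈ Finset.range (n + 1), z1 i k * z2 k j / kmPi α k p * D i k)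
                        = (z1 i k * D i k / kmPi α k p) * ∑ j ∈ Finset.range (n + 1), z2 k j by
                      rw [Finset.mul_sum]; exact Finset.sum_congr rfl fun j _ => by ring]
                    rw [hz2.2.1 k hk', div_mul_cancel₀ _ (hπ' k)]
                  · unfold planCost
                    rw [show (∑ i ∈ Finset.range (p + 1), ∑ j ∈ Finset.range (n + 1),
                        z2 i j * D i j) = ∑ j ∈ Finset.range (n + 1),
                        ∑ k ∈ Finset.range (p + 1), z2 k j * D k j from Finset.sum_comm]
                    rw [show (∑ i ∈ Finset.range (m + 1), ∑ j ∈ Finset.range (n + 1),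
                        ∑ k ∈ Finset.range (p + 1), z1 i k * z2 k j / kmPi α k p * D k j)
                        = ∑ j ∈ Finset.range (n + 1), ∑ i ∈ Finset.range (m + 1),
                        ∑ k ∈ Finset.range (p + 1), z1 i k * z2 k j / kmPi α k p * D k j
                        from Finset.sum_comm]
                    apply Finset.sum_congr rfl; intro j hj
                    rw [Finset.sum_comm]
                    apply Finset.sum_congr rfl; intro k hk
                    have hk' : k ≤ p := Nat.lt_succ_iff.mp (mem_range.mp hk)
                    rw [show (∑ i ∈ Finset.range (m + 1), z1 i k * z2 k j / kmPi α k p * D k j)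
                        = (z2 k j * D k j / kmPi α k p) * ∑ i ∈ Finset.range (m + 1), z1 i k by
                      rw [Finset.mul_sum]; exact Finset.sum_congr rfl fun i _ => by ring]
                    rw [hz1.2.2 k hk', div_mul_cancel₀ _ (hπ' k)]
          have hle : D (m + 1) (n + 1) ≤ planCost D m n z := D_le_cost hα0 hα hD hplan
          rw [hc1, hc2]
          linarith
end dlem3

/-- the triangle inequality `d_{mn} ≤ d_{mp} + d_{pn}` holds for all
`m, n, p ≥ -1` (shifted indices); consequently `d` is a metric on `{-1,0,1,...}`. -/
theorem km_dist_triangle (α : ℕ → ℝ) (hα0 : α 0 = 1)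
    (hα : ∀ n, 1 ≤ n → α n ∈ Set.Ioo (0 : ℝ) 1)
    (D : ℕ → ℕ → ℝ) (hD : IsKMDist α D) :
    (∀ m n p : ℕ, D m n ≤ D m p + D p n) ∧
    (∀ m n : ℕ, 0 ≤ D m n) ∧
    (∀ m n : ℕ, D m n = D n m) ∧
    (∀ m n : ℕ, D m n = 0 ↔ m = n) := by
  refine ⟨D_triangle hα0 hα hD, D_nonneg hα0 hα hD, D_symm hα0 hα hD, ?_⟩
  intro m n
  constructor
  · intro h
    by_contra hne
    exact absurd h (D_pos hα0 hα hD m n hne).ne'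
  · rintro rfl
    exact D_diag hα0 hα hD m
end

section
/- For fixed m, the map n ↦ d_{mn} is nondecreasing for n ≥ m, i.e., d_{mn} ≤ d_{m,n+1} for all n ≥ m. -/
open Finset

private lemma tele (f : ℕ → ℝ) (a b : ℕ) (h : a ≤ b) :
    ∑ i ∈ Ico a b, (f (i+1) - f i) = f b - f a := by
  induction b, h using Nat.le_induction with
  | base => simp
  | succ b hb ih => rw [Finset.sum_Ico_succ_top hb, ih]; ring

variable {α : ℕ → ℝ}

private lemma alpha_nonneg (hα0 : α 0 = 1) (hα : ∀ n, 1 ≤ n → α n ∈ Set.Ioo (0 : ℝ) 1) :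
    ∀ k, 0 ≤ α k := by
  intro k
  cases k with
  | zero => rw [hα0]; norm_num
  | succ k => exact (hα _ (Nat.succ_le_succ (Nat.zero_le _))).1.le

private lemma factor_nonneg (hα0 : α 0 = 1) (hα : ∀ n, 1 ≤ n → α n ∈ Set.Ioo (0 : ℝ) 1) :
    ∀ k, 0 ≤ 1 - α k := by
  intro k
  cases k with
  | zero => rw [hα0]; norm_num
  | succ k => linarith [(hα (k+1) (Nat.succ_le_succ (Nat.zero_le _))).2]

private lemma prod_factor_nonneg (hα0 : α 0 = 1) (hα : ∀ n, 1 ≤ n → α n ∈ Set.Ioo (0 : ℝ) 1)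
    (a b : ℕ) : 0 ≤ ∏ k ∈ Icc a b, (1 - α k) :=
  Finset.prod_nonneg (fun k _ => factor_nonneg hα0 hα k)

private lemma prod_factor_le_one (hα0 : α 0 = 1) (hα : ∀ n, 1 ≤ n → α n ∈ Set.Ioo (0 : ℝ) 1)
    (a b : ℕ) (ha : 1 ≤ a) : ∏ k ∈ Icc a b, (1 - α k) ≤ 1 := by
  apply Finset.prod_le_one (fun k _ => factor_nonneg hα0 hα k)
  intro k hk
  have hk1 : 1 ≤ k := le_trans ha (Finset.mem_Icc.mp hk).1
  linarith [(hα k hk1).1]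

private lemma kmPi_nonneg (hα0 : α 0 = 1) (hα : ∀ n, 1 ≤ n → α n ∈ Set.Ioo (0 : ℝ) 1)
    (i n : ℕ) : 0 ≤ kmPi α i n :=
  mul_nonneg (alpha_nonneg hα0 hα i) (prod_factor_nonneg hα0 hα _ _)

private lemma kmPi_succ (j n : ℕ) (h : j ≤ n) :
    kmPi α j (n+1) = kmPi α j n * (1 - α (n+1)) := by
  unfold kmPi
  rw [Finset.prod_Icc_succ_top (Nat.succ_le_succ h)]
  ring

private lemma kmPi_tail (N t : ℕ) :
    ∑ i ∈ Icc t N, kmPi α i N = 1 - ∏ k ∈ Icc t N, (1 - α k) := by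
  have key : ∀ i ∈ Icc t N, kmPi α i N =
      (∏ k ∈ Icc (i+1) N, (1 - α k)) - ∏ k ∈ Icc i N, (1 - α k) := by
    intro i hi
    have hiN : i ≤ N := (Finset.mem_Icc.mp hi).2
    have hins : Icc i N = insert i (Icc (i+1) N) := by
      ext x
      simp only [Finset.mem_Icc, Finset.mem_insert]
      omega
    rw [hins, Finset.prod_insert (by simp)]
    unfold kmPi; ring
  rw [Finset.sum_congr rfl key]
  rcases le_or_gt t N with h | h
  · have hIcoIcc : Icc t N = Ico t (N+1) := by rw [Finset.Ico_add_one_right_eq_Icc]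
    rw [hIcoIcc]
    have ht := tele (fun i => ∏ k ∈ Icc i N, (1 - α k)) t (N+1) (by omega)
    rw [ht]
    have hemp : Icc (N+1) N = ∅ := by rw [Finset.Icc_eq_empty]; omega
    rw [hemp, Finset.prod_empty, ← hIcoIcc]
  · have hemp : Icc t N = ∅ := by rw [Finset.Icc_eq_empty]; omega
    rw [hemp]; simp

private lemma kmPi_total (hα0 : α 0 = 1) (N : ℕ) :
    ∑ i ∈ range (N+1), kmPi α i N = 1 := by
  have h0 : Icc 0 N = range (N+1) := by rw [← Finset.Ico_add_one_right_eq_Icc, Nat.Ico_zero_eq_range]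
  rw [← h0, kmPi_tail]
  have hz : (∏ k ∈ Icc 0 N, (1 - α k)) = 0 :=
    Finset.prod_eq_zero (Finset.mem_Icc.mpr ⟨le_refl 0, Nat.zero_le N⟩) (by rw [hα0]; ring)
  rw [hz]; ring

private lemma kmPi_tail_mono (hα0 : α 0 = 1) (hα : ∀ n, 1 ≤ n → α n ∈ Set.Ioo (0 : ℝ) 1)
    (m n t : ℕ) (hmn : m ≤ n) :
    ∑ i ∈ Icc t m, kmPi α i m ≤ ∑ j ∈ Icc t n, kmPi α j n := by
  rw [kmPi_tail, kmPi_tail]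
  have key : ∏ k ∈ Icc t n, (1 - α k) ≤ ∏ k ∈ Icc t m, (1 - α k) := by
    rcases le_or_gt t m with h | h
    · have hsplit : ∏ k ∈ Ico t (n+1), (1 - α k)
          = (∏ k ∈ Ico t (m+1), (1 - α k)) * ∏ k ∈ Ico (m+1) (n+1), (1 - α k) :=
        (Finset.prod_Ico_consecutive _ (by omega) (by omega)).symm
      rw [← Finset.Ico_add_one_right_eq_Icc, ← Finset.Ico_add_one_right_eq_Icc (a := t) (b := m), hsplit]
      have h1 : ∏ k ∈ Ico (m+1) (n+1), (1 - α k) ≤ 1 := by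
        rw [Finset.Ico_add_one_right_eq_Icc]
        exact prod_factor_le_one hα0 hα _ _ (Nat.succ_le_succ (Nat.zero_le _))
      have h2 : 0 ≤ ∏ k ∈ Ico t (m+1), (1 - α k) := by
        rw [Finset.Ico_add_one_right_eq_Icc]; exact prod_factor_nonneg hα0 hα _ _
      nlinarith
    · have hemp : Icc t m = ∅ := by rw [Finset.Icc_eq_empty]; omega
      rw [hemp, Finset.prod_empty]
      exact prod_factor_le_one hα0 hα _ _ (by omega)
  linarith


private lemma abel_le (c h : ℕ → ℝ) (K i0 : ℕ)
    (h0 : ∀ j, j < i0 → h j = 0)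
    (hpre : ∀ t, t ≤ K → 0 ≤ ∑ j ∈ range t, h j)
    (htot : ∑ j ∈ range K, h j = 0)
    (hc : ∀ j, i0 ≤ j → j + 1 < K → c j ≤ c (j+1)) :
    ∑ j ∈ range K, h j * c j ≤ 0 := by
  have hsmul : ∀ j, h j * c j = c j • h j := by intro j; simp [smul_eq_mul]; ring
  rw [Finset.sum_congr rfl (fun j _ => hsmul j), Finset.sum_range_by_parts c h K, htot]
  have : 0 ≤ ∑ i ∈ range (K-1), (c (i+1) - c i) • ∑ j ∈ range (i+1), h j := by
    apply Finset.sum_nonneg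
    intro i hi
    have hiK : i < K - 1 := Finset.mem_range.mp hi
    rcases lt_or_ge i i0 with hlt | hge
    · have hz : ∑ j ∈ range (i+1), h j = 0 := by
        apply Finset.sum_eq_zero
        intro j hj
        exact h0 j (by have := Finset.mem_range.mp hj; omega)
      rw [hz]; simp
    · have h1 : 0 ≤ c (i+1) - c i := by
        have := hc i hge (by omega)
        linarith
      have h2 : 0 ≤ ∑ j ∈ range (i+1), h j := hpre (i+1) (by omega)
      simpa [smul_eq_mul] using mul_nonneg h1 h2
  simp only [smul_eq_mul, mul_zero, zero_sub] at *
  linarith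



private lemma reroute (m : ℕ) (τ : ℕ → ℝ) :
    ∀ (s : ℕ) (w : ℕ → ℕ → ℝ),
    (∀ i, i ≤ m → ∀ j, j ≤ s → 0 ≤ w i j) →
    (∀ j, j ≤ s → 0 ≤ τ j) →
    (∀ j, j < s → ∑ i ∈ range (m+1), w i j ≤ τ j) →
    (∑ j ∈ range (s+1), ∑ i ∈ range (m+1), w i j = ∑ j ∈ range (s+1), τ j) →
    (∀ t, t ≤ s → ∑ i ∈ Icc t m, ∑ j ∈ Icc t s, w i j ≤ ∑ j ∈ Icc t s, τ j) →
    ∃ y : ℕ → ℕ → ℝ,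
      (∀ i, i ≤ m → ∀ j, j ≤ s → 0 ≤ y i j) ∧
      (∀ i, i ≤ m → ∑ j ∈ range (s+1), y i j = ∑ j ∈ range (s+1), w i j) ∧
      (∀ j, j ≤ s → ∑ i ∈ range (m+1), y i j = τ j) ∧
      (∀ i, i ≤ m → ∀ j, j ≤ s → j < i → y i j = w i j) ∧
      (∀ i, i ≤ m → ∀ t, t ≤ s → ∑ j ∈ range (t+1), w i j ≤ ∑ j ∈ range (t+1), y i j) := by
  intro s
  induction s with
  | zero =>
    intro w hwnn hτnn _hb hd _hc
    refine ⟨w, hwnn, fun i _ => rfl, ?_, fun i _ j _ _ => rfl, fun i _ t _ => le_refl _⟩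
    intro j hj
    interval_cases j
    simpa using hd
  | succ s IH =>
    intro w hwnn hτnn hb hd hc
    set T : ℝ := τ (s+1) with hT
    set W : ℕ → ℝ := fun t => ∑ i ∈ Icc t m, w i (s+1) with hW
    set f : ℕ → ℝ := fun t => min (W t) T with hf
    set κ : ℕ → ℝ := fun i => f i - f (i+1) with hκ
    set μ : ℕ → ℝ := fun i => w i (s+1) - κ i with hμ
    have hTnn : 0 ≤ T := hτnn (s+1) (le_refl _)
    have hWrec : ∀ i, i ≤ m → W i = w i (s+1) + W (i+1) := by
      intro i him
      have hins : Icc i m = insert i (Icc (i+1) m) := by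
        ext x; simp only [Finset.mem_Icc, Finset.mem_insert]; omega
      simp only [hW, hins]
      rw [Finset.sum_insert (by simp)]
    have hWzero : ∀ i, m < i → W i = 0 := by
      intro i hmi
      simp only [hW]
      rw [Finset.Icc_eq_empty (by omega), Finset.sum_empty]
    have hWanti : ∀ a b : ℕ, a ≤ b → W b ≤ W a := by
      intro a b hab
      apply Finset.sum_le_sum_of_subset_of_nonneg (Finset.Icc_subset_Icc_left hab)
      intro i hi _
      exact hwnn i (Finset.mem_Icc.mp hi).2 (s+1) (le_refl _)
    have hWnn : ∀ t, 0 ≤ W t := by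
      intro t
      rcases le_or_gt t m with h | h
      · calc (0:ℝ) = W (m+1) := (hWzero _ (by omega)).symm
          _ ≤ W t := hWanti t (m+1) (by omega)
      · rw [hWzero t h]
    have hκbound : ∀ i, i ≤ m → 0 ≤ κ i ∧ κ i ≤ w i (s+1) := by
      intro i him
      have h1 := hWrec i him
      have h2 : 0 ≤ w i (s+1) := hwnn i him (s+1) (le_refl _)
      constructor
      · simp only [hκ, hf, sub_nonneg]
        exact min_le_min (by linarith [hWanti i (i+1) (by omega)] ) (le_refl T)
      · simp only [hκ, hf]
        rcases le_total (W (i+1)) T with h | h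
        · rw [min_eq_left h]
          have := min_le_left (W i) T
          linarith
        · rw [min_eq_right h]
          have := min_le_right (W i) T
          linarith
    have hμnn : ∀ i, i ≤ m → 0 ≤ μ i := by
      intro i him
      have := (hκbound i him).2
      simp only [hμ]; linarith
    have hfm1 : f (m+1) = 0 := by
      simp only [hf]
      rw [hWzero (m+1) (by omega), min_eq_left hTnn]
    have hfzero : ∀ t, m < t → f t = 0 := by
      intro t ht
      simp only [hf]
      rw [hWzero t ht, min_eq_left hTnn]
    have hκtail : ∀ t : ℕ, ∑ i ∈ Icc t m, κ i = f t := by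
      intro t
      rcases le_or_gt t (m+1) with ht | ht
      · have h1 : Icc t m = Ico t (m+1) := by rw [Finset.Ico_add_one_right_eq_Icc]
        have h2 := tele (fun i => - f i) t (m+1) ht
        rw [h1]
        have h3 : ∀ i ∈ Ico t (m+1), κ i = (-f (i+1)) - (-f i) := by
          intro i _; simp only [hκ]; ring
        rw [Finset.sum_congr rfl h3, h2, hfm1]
        ring
      · rw [Finset.Icc_eq_empty (by omega), Finset.sum_empty, hfzero t (by omega)]
    have hμtail : ∀ t : ℕ, ∑ i ∈ Icc t m, μ i = W t - f t := by
      intro t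
      have h4 : ∑ i ∈ Icc t m, μ i = (∑ i ∈ Icc t m, w i (s+1)) - ∑ i ∈ Icc t m, κ i := by
        simp only [hμ, Finset.sum_sub_distrib]
      rw [h4, hκtail t]
    have hIcc0 : Icc 0 m = range (m+1) := by rw [← Finset.Ico_add_one_right_eq_Icc, Nat.Ico_zero_eq_range]
    have hW0T : T ≤ W 0 := by
      have hsplit := Finset.sum_range_succ (fun j => ∑ i ∈ range (m+1), w i j) (s+1)
      have hsplitτ := Finset.sum_range_succ τ (s+1)
      have hle : ∑ j ∈ range (s+1), ∑ i ∈ range (m+1), w i j ≤ ∑ j ∈ range (s+1), τ j :=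
        Finset.sum_le_sum (fun j hj => hb j (Finset.mem_range.mp hj))
      have hW0 : W 0 = ∑ i ∈ range (m+1), w i (s+1) := by
        simp only [hW, hIcc0]
      rw [hsplit, hsplitτ] at hd
      rw [hW0]
      linarith
    have hf0 : f 0 = T := by
      simp only [hf]; rw [min_eq_right hW0T]
    have hWs1 : W (s+1) ≤ T := by
      have := hc (s+1) (le_refl _)
      have h1 : Icc (s+1) (s+1) = {s+1} := by rw [Finset.Icc_self]
      rw [h1] at this
      simp only [Finset.sum_singleton] at this
      exact this
    have hκhigh : ∀ i, s + 1 ≤ i → i ≤ m → κ i = w i (s+1) := by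
      intro i hsi him
      have h1 : W i ≤ T := le_trans (hWanti (s+1) i hsi) hWs1
      have h2 : W (i+1) ≤ T := le_trans (hWanti (s+1) (i+1) (by omega)) hWs1
      simp only [hκ, hf]
      rw [min_eq_left h1, min_eq_left h2, hWrec i him]
      ring
    have hμhigh : ∀ i, s + 1 ≤ i → i ≤ m → μ i = 0 := by
      intro i hsi him
      simp only [hμ]
      rw [hκhigh i hsi him]; ring
    -- the shifted matrix
    set w' : ℕ → ℕ → ℝ := fun i j => w i j + if j = s then μ i else 0 with hw'
    have hw'row : ∀ i, i ≤ m → ∑ j ∈ range (s+1), w' i j = (∑ j ∈ range (s+1), w i j) + μ i := by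
      intro i _
      simp only [hw']
      rw [Finset.sum_add_distrib, Finset.sum_ite_eq' (range (s+1)) s (fun _ => μ i)]
      simp
    -- hypotheses of IH for w'
    have hwnn' : ∀ i, i ≤ m → ∀ j, j ≤ s → 0 ≤ w' i j := by
      intro i him j hjs
      have h1 := hwnn i him j (by omega)
      simp only [hw']
      split
      · linarith [hμnn i him]
      · linarith
    have hb' : ∀ j, j < s → ∑ i ∈ range (m+1), w' i j ≤ τ j := by
      intro j hj
      have : ∑ i ∈ range (m+1), w' i j = ∑ i ∈ range (m+1), w i j := by
        apply Finset.sum_congr rfl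
        intro i _
        simp only [hw']
        rw [if_neg (by omega)]
        ring
      rw [this]
      exact hb j (by omega)
    have hd' : ∑ j ∈ range (s+1), ∑ i ∈ range (m+1), w' i j = ∑ j ∈ range (s+1), τ j := by
      have hswap : ∀ v : ℕ → ℕ → ℝ, ∑ j ∈ range (s+1), ∑ i ∈ range (m+1), v i j
          = ∑ i ∈ range (m+1), ∑ j ∈ range (s+1), v i j := fun v => Finset.sum_comm
      rw [hswap]
      have h1 : ∀ i ∈ range (m+1), ∑ j ∈ range (s+1), w' i j
          = (∑ j ∈ range (s+1), w i j) + μ i := by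
        intro i hi
        exact hw'row i (by have := Finset.mem_range.mp hi; omega)
      rw [Finset.sum_congr rfl h1, Finset.sum_add_distrib, ← hswap]
      have hμ0 : ∑ i ∈ range (m+1), μ i = W 0 - T := by
        rw [← hIcc0]
        rw [hμtail 0, hf0]
      rw [hμ0]
      have hsplit := Finset.sum_range_succ (fun j => ∑ i ∈ range (m+1), w i j) (s+1)
      have hsplitτ := Finset.sum_range_succ τ (s+1)
      rw [hsplit, hsplitτ] at hd
      have hW0 : W 0 = ∑ i ∈ range (m+1), w i (s+1) := by simp only [hW, hIcc0]
      rw [hW0]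
      linarith
    have hc' : ∀ t, t ≤ s → ∑ i ∈ Icc t m, ∑ j ∈ Icc t s, w' i j ≤ ∑ j ∈ Icc t s, τ j := by
      intro t hts
      have hsmem : s ∈ Icc t s := Finset.mem_Icc.mpr ⟨hts, le_refl _⟩
      have hrow : ∀ i, ∑ j ∈ Icc t s, w' i j = (∑ j ∈ Icc t s, w i j) + μ i := by
        intro i
        simp only [hw']
        rw [Finset.sum_add_distrib, Finset.sum_ite_eq' (Icc t s) s (fun _ => μ i)]
        simp [hsmem]
      have hLHS : ∑ i ∈ Icc t m, ∑ j ∈ Icc t s, w' i j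
          = (∑ i ∈ Icc t m, ∑ j ∈ Icc t s, w i j) + (W t - f t) := by
        rw [Finset.sum_congr rfl (fun i _ => hrow i), Finset.sum_add_distrib,
          hμtail t]
      rw [hLHS]
      have hIccsplit : ∀ i : ℕ, ∑ j ∈ Icc t (s+1), w i j = (∑ j ∈ Icc t s, w i j) + w i (s+1) := by
        intro i
        have : Icc t (s+1) = insert (s+1) (Icc t s) := by
          ext x; simp only [Finset.mem_Icc, Finset.mem_insert]; omega
        rw [this, Finset.sum_insert (by simp)]
        ring
      have hhall := hc t (by omega)
      have hτsplit : ∑ j ∈ Icc t (s+1), τ j = (∑ j ∈ Icc t s, τ j) + T := by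
        have : Icc t (s+1) = insert (s+1) (Icc t s) := by
          ext x; simp only [Finset.mem_Icc, Finset.mem_insert]; omega
        rw [this, Finset.sum_insert (by simp)]
        ring
      have hwfull : ∑ i ∈ Icc t m, ∑ j ∈ Icc t (s+1), w i j
          = (∑ i ∈ Icc t m, ∑ j ∈ Icc t s, w i j) + W t := by
        rw [Finset.sum_congr rfl (fun i _ => hIccsplit i), Finset.sum_add_distrib]
      rcases le_total T (W t) with hcase | hcase
      · have hft : f t = T := by simp only [hf]; rw [min_eq_right hcase]
        rw [hft]
        rw [hwfull, hτsplit] at hhall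
        linarith
      · have hft : f t = W t := by simp only [hf]; rw [min_eq_left hcase]
        rw [hft]
        have hA : ∑ i ∈ Icc t m, ∑ j ∈ Icc t s, w i j ≤ ∑ j ∈ Icc t s, τ j := by
          have hswap : ∑ i ∈ Icc t m, ∑ j ∈ Icc t s, w i j
              = ∑ j ∈ Icc t s, ∑ i ∈ Icc t m, w i j := Finset.sum_comm
          rw [hswap]
          apply Finset.sum_le_sum
          intro j hj
          have hjs : j ≤ s := (Finset.mem_Icc.mp hj).2
          calc ∑ i ∈ Icc t m, w i j ≤ ∑ i ∈ range (m+1), w i j := by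
                apply Finset.sum_le_sum_of_subset_of_nonneg
                · intro x hx
                  simp only [Finset.mem_Icc] at hx
                  simp only [Finset.mem_range]; omega
                · intro i hi _
                  exact hwnn i (by have := Finset.mem_range.mp hi; omega) j (by omega)
            _ ≤ τ j := hb j (by omega)
        linarith
    obtain ⟨y', hy'nn, hy'row, hy'col, hy'diag, hy'pre⟩ := IH w' hwnn'
      (fun j hj => hτnn j (by omega)) hb' hd' hc'
    have hμκ : ∀ i, μ i + κ i = w i (s+1) := by
      intro i; simp only [hμ]; ring
    refine ⟨fun i j => if j = s+1 then κ i else y' i j, ?_, ?_, ?_, ?_, ?_⟩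
    · intro i him j hj
      dsimp only
      split
      · exact (hκbound i him).1
      · exact hy'nn i him j (by omega)
    · intro i him
      have h1 : ∑ j ∈ range (s+1), (if j = s+1 then κ i else y' i j) = ∑ j ∈ range (s+1), y' i j := by
        apply Finset.sum_congr rfl
        intro j hj
        rw [if_neg (by have := Finset.mem_range.mp hj; omega)]
      rw [Finset.sum_range_succ (fun j => if j = s+1 then κ i else y' i j) (s+1),
        Finset.sum_range_succ (fun j => w i j) (s+1), h1, if_pos rfl,
        hy'row i him, hw'row i him]
      have := hμκ i
      linarith
    · intro j hj
      rcases Nat.lt_or_ge j (s+1) with h | h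
      · have h1 : ∑ i ∈ range (m+1), (if j = s+1 then κ i else y' i j)
            = ∑ i ∈ range (m+1), y' i j := by
          apply Finset.sum_congr rfl
          intro i _
          rw [if_neg (by omega)]
        rw [h1]
        exact hy'col j (by omega)
      · have hj1 : j = s+1 := by omega
        subst hj1
        have h1 : ∑ i ∈ range (m+1), (if (s+1 : ℕ) = s+1 then κ i else y' i (s+1))
            = ∑ i ∈ range (m+1), κ i := by
          apply Finset.sum_congr rfl
          intro i _
          rw [if_pos rfl]
        rw [h1, ← hIcc0, hκtail 0, hf0]
    · intro i him j hj hji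
      dsimp only
      rcases Nat.lt_or_ge j (s+1) with h | h
      · rw [if_neg (by omega), hy'diag i him j (by omega) hji]
        simp only [hw']
        rcases eq_or_ne j s with rfl | hne
        · rw [if_pos rfl, hμhigh i (by omega) him]
          ring
        · rw [if_neg hne]; ring
      · have hj1 : j = s+1 := by omega
        subst hj1
        rw [if_pos rfl]
        exact hκhigh i (by omega) him
    · intro i him t ht
      dsimp only
      rcases Nat.lt_or_ge t (s+1) with h | h
      · have h1 : ∑ j ∈ range (t+1), (if j = s+1 then κ i else y' i j)
            = ∑ j ∈ range (t+1), y' i j := by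
          apply Finset.sum_congr rfl
          intro j hj
          rw [if_neg (by have := Finset.mem_range.mp hj; omega)]
        rw [h1]
        calc ∑ j ∈ range (t+1), w i j ≤ ∑ j ∈ range (t+1), w' i j := by
              apply Finset.sum_le_sum
              intro j _
              simp only [hw']
              split
              · linarith [hμnn i him]
              · linarith
          _ ≤ ∑ j ∈ range (t+1), y' i j := hy'pre i him t (by omega)
      · have ht1 : t = s+1 := by omega
        subst ht1
        have h1 : ∑ j ∈ range (s+1), (if j = s+1 then κ i else y' i j)
            = ∑ j ∈ range (s+1), y' i j := by
          apply Finset.sum_congr rfl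
          intro j hj
          rw [if_neg (by have := Finset.mem_range.mp hj; omega)]
        have h2 : ∑ j ∈ range (s+1+1), (if j = s+1 then κ i else y' i j)
            = ∑ j ∈ range (s+1+1), w i j := by
          rw [Finset.sum_range_succ (fun j => if j = s+1 then κ i else y' i j) (s+1),
            Finset.sum_range_succ (fun j => w i j) (s+1), h1, if_pos rfl,
            hy'row i him, hw'row i him]
          have := hμκ i
          linarith
        exact le_of_eq h2.symm


/-- for fixed `m`, `n ↦ d_{mn}` is nondecreasing for `n ≥ m`. -/
theorem km_dist_mono_right (α : ℕ → ℝ) (hα0 : α 0 = 1)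
    (hα : ∀ n, 1 ≤ n → α n ∈ Set.Ioo (0 : ℝ) 1)
    (D : ℕ → ℕ → ℝ) (hD : IsKMDist α D) :
    ∀ m n : ℕ, m ≤ n → D (m + 1) (n + 1) ≤ D (m + 1) (n + 2) := by
  obtain ⟨hD00, hD0k, hDk0, hLeast⟩ := hD
  intro m
  induction m using Nat.strong_induction_on with
  | _ m IH =>
  intro n hmn
  -- monotonicity of the cost rows, from the induction hypothesis
  have mono : ∀ i, i ≤ m → ∀ j, i ≤ j → j ≤ n → D i j ≤ D i (j+1) := by
    intro i him j hij hjn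
    cases i with
    | zero =>
      cases j with
      | zero => rw [hD00, hD0k 0]; norm_num
      | succ j' => rw [hD0k j', hD0k (j'+1)]
    | succ i' =>
      cases j with
      | zero => omega
      | succ j' => exact IH i' (by omega) j' (by omega)
  -- the optimal plan for (m, n+1)
  obtain ⟨⟨z, hz, hzc⟩, hlb⟩ := hLeast m (n+1)
  obtain ⟨hznn, hzrow, hzcol⟩ := hz
  set τ : ℕ → ℝ := fun j => if j = n+1 then 0 else kmPi α j n with hτdef
  have hτn1 : τ (n+1) = 0 := by simp only [hτdef, if_pos rfl]
  have hτval : ∀ j, j ≤ n → τ j = kmPi α j n := by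
    intro j hj
    simp only [hτdef]
    rw [if_neg (by omega)]
  -- hypotheses of the rerouting lemma
  have h2 : ∀ j, j ≤ n+1 → 0 ≤ τ j := by
    intro j hj
    simp only [hτdef]
    split
    · exact le_refl 0
    · exact kmPi_nonneg hα0 hα j n
  have h3 : ∀ j, j < n+1 → ∑ i ∈ range (m+1), z i j ≤ τ j := by
    intro j hj
    rw [hzcol j (by omega), hτval j (by omega), kmPi_succ j n (by omega)]
    have h1 := kmPi_nonneg hα0 hα j n
    have h2' := alpha_nonneg hα0 hα (n+1)
    nlinarith
  have h4 : ∑ j ∈ range (n+1+1), ∑ i ∈ range (m+1), z i j = ∑ j ∈ range (n+1+1), τ j := by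
    have hL : ∑ j ∈ range (n+2), ∑ i ∈ range (m+1), z i j
        = ∑ j ∈ range (n+2), kmPi α j (n+1) := by
      apply Finset.sum_congr rfl
      intro j hj
      exact hzcol j (by have := Finset.mem_range.mp hj; omega)
    have hR : ∑ j ∈ range (n+1+1), τ j = ∑ j ∈ range (n+1), kmPi α j n := by
      rw [Finset.sum_range_succ, hτn1, add_zero]
      apply Finset.sum_congr rfl
      intro j hj
      exact hτval j (by have := Finset.mem_range.mp hj; omega)
    rw [hL, hR, kmPi_total hα0 (n+1), kmPi_total hα0 n]
  have h5 : ∀ t, t ≤ n+1 → ∑ i ∈ Icc t m, ∑ j ∈ Icc t (n+1), z i j ≤ ∑ j ∈ Icc t (n+1), τ j := by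
    intro t ht
    have step1 : ∑ i ∈ Icc t m, ∑ j ∈ Icc t (n+1), z i j ≤ ∑ i ∈ Icc t m, kmPi α i m := by
      apply Finset.sum_le_sum
      intro i hi
      have him : i ≤ m := (Finset.mem_Icc.mp hi).2
      rw [← hzrow i him]
      apply Finset.sum_le_sum_of_subset_of_nonneg
      · intro x hx
        have := Finset.mem_Icc.mp hx
        exact Finset.mem_range.mpr (by omega)
      · intro j hj _
        exact hznn i him j (by have := Finset.mem_range.mp hj; omega)
    have step2 : (∑ i ∈ Icc t m, kmPi α i m) ≤ ∑ j ∈ Icc t n, kmPi α j n :=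
      kmPi_tail_mono hα0 hα m n t hmn
    have step3 : ∑ j ∈ Icc t (n+1), τ j = ∑ j ∈ Icc t n, kmPi α j n := by
      rcases le_or_gt t n with htn | htn
      · have hins : Icc t (n+1) = insert (n+1) (Icc t n) := by
          ext x; simp only [Finset.mem_Icc, Finset.mem_insert]; omega
        rw [hins, Finset.sum_insert (by simp), hτn1, zero_add]
        apply Finset.sum_congr rfl
        intro j hj
        exact hτval j (Finset.mem_Icc.mp hj).2
      · have h1 : Icc t (n+1) = {n+1} := by
          ext x; simp only [Finset.mem_Icc, Finset.mem_singleton]; omega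
        have h2' : Icc t n = (∅ : Finset ℕ) := by
          rw [Finset.Icc_eq_empty]; omega
        rw [h1, h2', Finset.sum_singleton, Finset.sum_empty, hτn1]
    rw [step3]
    linarith
  obtain ⟨y, hynn, hyrow, hycol, hydiag, hypre⟩ :=
    reroute m τ (n+1) z (fun i him j hj => hznn i him j hj) h2 h3 h4 h5
  -- the last column of y vanishes
  have hylast : ∀ i, i ≤ m → y i (n+1) = 0 := by
    intro i him
    have hcol := hycol (n+1) (le_refl _)
    rw [hτn1] at hcol
    have := (Finset.sum_eq_zero_iff_of_nonneg
      (fun i hi => hynn i (by have := Finset.mem_range.mp hi; omega) (n+1) (le_refl _))).mp hcol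
    exact this i (Finset.mem_range.mpr (by omega))
  -- y (restricted to columns ≤ n) is a plan for (m, n)
  have hyplan : IsPlan α m n y := by
    refine ⟨fun i him j hj => hynn i him j (by omega), ?_, ?_⟩
    · intro i him
      have h1 : ∑ j ∈ range (n+1+1), y i j = ∑ j ∈ range (n+1), y i j + y i (n+1) :=
        Finset.sum_range_succ _ _
      have h2' : ∑ j ∈ range (n+1+1), z i j = kmPi α i m := hzrow i him
      have := hyrow i him
      rw [h1, hylast i him, add_zero] at this
      rw [this, h2']
    · intro j hj
      rw [hycol j (by omega), hτval j hj]
  -- lower bound: D (m+1) (n+1) is at most the cost of y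
  have hlow : D (m+1) (n+1) ≤ planCost D m n y :=
    (hLeast m n).2 ⟨y, hyplan, rfl⟩
  -- cost comparison
  have hcomp : planCost D m n y ≤ planCost D m (n+1) z := by
    unfold planCost
    apply Finset.sum_le_sum
    intro i hi
    have him : i ≤ m := by have := Finset.mem_range.mp hi; omega
    have hexp : ∑ j ∈ range (n+1), y i j * D i j = ∑ j ∈ range (n+1+1), y i j * D i j := by
      rw [Finset.sum_range_succ (fun j => y i j * D i j) (n+1), hylast i him, zero_mul, add_zero]
    rw [hexp]
    have habel : ∑ j ∈ range (n+2), (y i j - z i j) * D i j ≤ 0 := by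
      apply abel_le (D i) (fun j => y i j - z i j) (n+2) i
      · intro j hji
        rw [hydiag i him j (by omega) hji]
        ring
      · intro t htK
        cases t with
        | zero => simp
        | succ t' =>
          have := hypre i him t' (by omega)
          rw [Finset.sum_sub_distrib]
          linarith
      · have h1 := hyrow i him
        rw [Finset.sum_sub_distrib]
        rw [h1]
        ring
      · intro j hij hjK
        exact mono i him j hij (by omega)
    have hsplit : ∑ j ∈ range (n+2), (y i j - z i j) * D i j
        = (∑ j ∈ range (n+2), y i j * D i j) - ∑ j ∈ range (n+2), z i j * D i j := by
      rw [← Finset.sum_sub_distrib]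
      apply Finset.sum_congr rfl
      intro j _
      ring
    rw [hsplit] at habel
    linarith
  calc D (m+1) (n+1) ≤ planCost D m n y := hlow
    _ ≤ planCost D m (n+1) z := hcomp
    _ = D (m+1) (n+2) := hzc.symm
end
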